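/- The specialization construction for a recollement: let 𝒟 be the recollement of 𝒟₀ and 𝒟₁ such that L₀ ∘ i₁ : 𝒟₁ → 𝒟₀ admits a left adjoint U : 𝒟₀ → 𝒟₁. Then there is a functor sp_𝒟 : 𝒟 → Fun(Δ¹, 𝒟₁) determined by the pair of functors (U ∘ L₀, L₁) and the natural transformation U ∘ L₀ → L₁ that corresponds, under the adjunction U ⊣ (L₀ ∘ i₁), to the transformation L₀ → L₀ ∘ i₁ ∘ L₁ induced by the unit id → i₁ ∘ L₁. Moreover Fun(Δ¹, 𝒟₁) is itself the recollement of 𝒟₁ and 𝒟₁ determined by the identity adjunction, and sp_𝒟 is the functor glued via the universal property of that recollement. -/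

import Mathlib

/-!
STATEMENT 19: The specialization construction for a recollement.  Let 𝒟 be the recollement
of 𝒟₀ and 𝒟₁ and suppose L₀ ∘ i₁ : 𝒟₁ → 𝒟₀ admits a left adjoint U.  First, the arrow
category Fun(Δ¹, 𝒟₁) is itself the recollement of 𝒟₁ and 𝒟₁ determined by the identity
adjunction, with localizations the evaluations ev₀ and ev₁.  Second, there is a functor
sp : 𝒟 → Fun(Δ¹, 𝒟₁) glued (via the universal property of that recollement) from the pair
(U ∘ L₀, L₁) and the natural transformation U ∘ L₀ → L₁ corresponding, under the
adjunction U ⊣ L₀ ∘ i₁, to the transformation L₀ → L₀ ∘ i₁ ∘ L₁ induced by the unit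
id → i₁ ∘ L₁.
-/

open CategoryTheory CategoryTheory.Limits

/-- A recollement in the sense of Lurie, Higher Algebra A.8.1: a category `C` with finite
limits, two (fully faithful embeddings of) subcategories `i₀ : C₀ ⥤ C`, `i₁ : C₁ ⥤ C`
admitting left exact left adjoints `L₀`, `L₁`, such that `L₁ ∘ i₀` is constant at a final
object and `(L₀, L₁)` jointly detect equivalences. -/
structure Recollement (C : Type*) (C₀ : Type*) (C₁ : Type*)
    [Category C] [Category C₀] [Category C₁] where
  hasFiniteLimits : HasFiniteLimits C
  i₀ : C₀ ⥤ C
  i₁ : C₁ ⥤ C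
  i₀_full : i₀.Full
  i₀_faithful : i₀.Faithful
  i₁_full : i₁.Full
  i₁_faithful : i₁.Faithful
  L₀ : C ⥤ C₀
  L₁ : C ⥤ C₁
  adj₀ : L₀ ⊣ i₀
  adj₁ : L₁ ⊣ i₁
  L₀_leftExact : PreservesFiniteLimits L₀
  L₁_leftExact : PreservesFiniteLimits L₁
  term : C₁
  term_isTerminal : IsTerminal term
  L₁_comp_i₀ : i₀ ⋙ L₁ ≅ (Functor.const C₀).obj term
  jointly_conservative :
    ∀ {x y : C} (f : x ⟶ y), IsIso (L₀.map f) → IsIso (L₁.map f) → IsIso f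

section Aux

variable {D₁ : Type*} [Category D₁]

/-- The inclusion `d ↦ (d → term)`. -/
@[simps]
def arrowJ₀ {t : D₁} (ht : IsTerminal t) : D₁ ⥤ Arrow D₁ where
  obj d := Arrow.mk (ht.from d)
  map {d d'} f := Arrow.homMk (u := f) (v := 𝟙 t) (ht.hom_ext _ _)
  map_id d := by ext <;> simp
  map_comp f g := by ext <;> simp

/-- The diagonal inclusion `d ↦ (d = d)`. -/
@[simps]
def arrowDiag : D₁ ⥤ Arrow D₁ where
  obj d := Arrow.mk (𝟙 d)
  map {d d'} f := Arrow.homMk (u := f) (v := f) (by simp)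
  map_id d := by ext <;> simp
  map_comp f g := by ext <;> simp

/-- `leftFunc ⊣ arrowJ₀`. -/
def arrowAdj₀ {t : D₁} (ht : IsTerminal t) : (Arrow.leftFunc : Arrow D₁ ⥤ D₁) ⊣ arrowJ₀ ht :=
  Adjunction.mkOfHomEquiv
    { homEquiv := fun X d =>
        { toFun := fun f => Arrow.homMk (u := f) (v := ht.from X.right) (ht.hom_ext _ _)
          invFun := fun g => g.left
          left_inv := fun f => rfl
          right_inv := fun g => by
            ext
            · rfl
            · exact ht.hom_ext _ _ }
      homEquiv_naturality_left_symm := fun f g => rfl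
      homEquiv_naturality_right := fun f g => by
        ext
        · rfl
        · exact ht.hom_ext _ _ }

/-- `rightFunc ⊣ arrowDiag`. -/
def arrowAdj₁ : (Arrow.rightFunc : Arrow D₁ ⥤ D₁) ⊣ arrowDiag :=
  Adjunction.mkOfHomEquiv
    { homEquiv := fun X d =>
        { toFun := fun g => Arrow.homMk (u := X.hom ≫ g) (v := g) (Category.comp_id _)
          invFun := fun h => h.right
          left_inv := fun g => rfl
          right_inv := fun h => by
            ext
            · exact h.w.symm.trans (Category.comp_id _)
            · rfl }
      homEquiv_naturality_left_symm := fun f g => rfl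
      homEquiv_naturality_right := fun f g => by
        ext
        · exact (Category.assoc _ _ _).symm
        · rfl }

lemma arrowJ₀_faithful {t : D₁} (ht : IsTerminal t) : (arrowJ₀ ht).Faithful :=
  ⟨fun {d d'} {f g} h => by
    have := congrArg CommaMorphism.left h
    exact this⟩

lemma arrowJ₀_full {t : D₁} (ht : IsTerminal t) : (arrowJ₀ ht).Full :=
  ⟨fun {d d'} g => ⟨g.left, by
    ext
    · rfl
    · exact ht.hom_ext _ _⟩⟩

lemma arrowDiag_faithful : (arrowDiag : D₁ ⥤ Arrow D₁).Faithful :=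
  ⟨fun {d d'} {f g} h => by
    have := congrArg CommaMorphism.left h
    exact this⟩

lemma arrowDiag_full : (arrowDiag : D₁ ⥤ Arrow D₁).Full :=
  ⟨fun {d d'} g => ⟨g.left, by
    ext
    · rfl
    · exact (Category.comp_id _).symm.trans (g.w.trans (Category.id_comp _))⟩⟩

noncomputable def arrowLeftFuncPreservesFiniteLimits [HasFiniteLimits D₁] :
    PreservesFiniteLimits (Arrow.leftFunc : Arrow D₁ ⥤ D₁) :=
  ⟨fun J _ => ⟨fun {F} =>
    preservesLimit_of_preserves_limit_cone
      (Comma.coneOfPreservesIsLimit F (limit.isLimit (F ⋙ Arrow.leftFunc))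
        (limit.isLimit (F ⋙ Arrow.rightFunc)))
      (IsLimit.ofIsoLimit (limit.isLimit (F ⋙ Arrow.leftFunc))
        (Cones.ext (Iso.refl _) (fun j => by exact (Category.id_comp _).symm)))⟩⟩

noncomputable def arrowRightFuncPreservesFiniteLimits [HasFiniteLimits D₁] :
    PreservesFiniteLimits (Arrow.rightFunc : Arrow D₁ ⥤ D₁) :=
  ⟨fun J _ => ⟨fun {F} =>
    preservesLimit_of_preserves_limit_cone
      (Comma.coneOfPreservesIsLimit F (limit.isLimit (F ⋙ Arrow.leftFunc))
        (limit.isLimit (F ⋙ Arrow.rightFunc)))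
      (IsLimit.ofIsoLimit (limit.isLimit (F ⋙ Arrow.rightFunc))
        (Cones.ext (Iso.refl _) (fun j => by exact (Category.id_comp _).symm)))⟩⟩

/-- The arrow category of `D₁` as a recollement of `D₁` and `D₁`. -/
noncomputable def arrowRecollement [HasFiniteLimits D₁] {t : D₁} (ht : IsTerminal t) :
    Recollement (Arrow D₁) D₁ D₁ where
  hasFiniteLimits := ⟨fun J _ _ => inferInstance⟩
  i₀ := arrowJ₀ ht
  i₁ := arrowDiag
  i₀_full := arrowJ₀_full ht
  i₀_faithful := arrowJ₀_faithful ht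
  i₁_full := arrowDiag_full
  i₁_faithful := arrowDiag_faithful
  L₀ := Arrow.leftFunc
  L₁ := Arrow.rightFunc
  adj₀ := arrowAdj₀ ht
  adj₁ := arrowAdj₁
  L₀_leftExact := arrowLeftFuncPreservesFiniteLimits
  L₁_leftExact := arrowRightFuncPreservesFiniteLimits
  term := t
  term_isTerminal := ht
  L₁_comp_i₀ := NatIso.ofComponents (fun d => Iso.refl _) (fun f => by exact ht.hom_ext _ _)
  jointly_conservative := by
    intro x y f h0 h1
    haveI : IsIso f.left := h0
    haveI : IsIso f.right := h1
    refine ⟨⟨⟨inv f.left, inv f.right, ?_⟩, ?_, ?_⟩⟩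
    · simp only [Functor.id_map]
      rw [IsIso.inv_comp_eq]
      have hw : f.left ≫ y.hom = x.hom ≫ f.right := f.w
      rw [← Category.assoc, hw]
      simp
    · ext <;> exact IsIso.hom_inv_id _
    · ext <;> exact IsIso.inv_hom_id _

end Aux

/-- The specialization functor of a recollement whose gluing functor admits a left
adjoint. -/
theorem recollement_specialization_functor
    {D D₀ D₁ : Type*} [Category D] [Category D₀] [Category D₁]
    (R : Recollement D D₀ D₁)
    (U : D₀ ⥤ D₁) (adjU : U ⊣ R.i₁ ⋙ R.L₀) :
    -- Fun(Δ¹, 𝒟₁) is the recollement of 𝒟₁ and 𝒟₁ with localizations ev₀ and ev₁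
    (∃ R' : Recollement (Arrow D₁) D₁ D₁,
      R'.L₀ = Arrow.leftFunc ∧ R'.L₁ = Arrow.rightFunc) ∧
    -- the specialization functor sp : 𝒟 → Fun(Δ¹, 𝒟₁)
    (∃ sp : D ⥤ Arrow D₁,
      Nonempty (sp ⋙ Arrow.leftFunc ≅ R.L₀ ⋙ U) ∧
      Nonempty (sp ⋙ Arrow.rightFunc ≅ R.L₁) ∧
      -- the arrow component of sp corresponds under U ⊣ L₀ ∘ i₁ to
      -- L₀ → L₀ ∘ i₁ ∘ L₁ induced by the unit id → i₁ ∘ L₁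
      ∀ x : D, ∃ (hl : (sp.obj x).left = U.obj (R.L₀.obj x))
        (hr : (sp.obj x).right = R.L₁.obj x),
        (adjU.homEquiv (R.L₀.obj x) (R.L₁.obj x))
            (eqToHom hl.symm ≫ (sp.obj x).hom ≫ eqToHom hr) =
          R.L₀.map (R.adj₁.unit.app x)) := by
  constructor
  · -- the arrow category is a recollement
    haveI := R.hasFiniteLimits
    haveI := R.i₁_full
    haveI := R.i₁_faithful
    haveI : Reflective R.i₁ := ⟨R.L₁, R.adj₁⟩
    haveI : HasFiniteLimits D₁ := ⟨fun J _ _ => hasLimitsOfShape_of_reflective R.i₁⟩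
    exact ⟨arrowRecollement R.term_isTerminal, rfl, rfl⟩
  · -- the specialization functor
    let ψ : R.L₀ ⟶ R.L₁ ⋙ (R.i₁ ⋙ R.L₀) := Functor.whiskerRight R.adj₁.unit R.L₀
    let φ : R.L₀ ⋙ U ⟶ R.L₁ := Functor.whiskerRight ψ U ≫ Functor.whiskerLeft R.L₁ adjU.counit
    have hφ : ∀ x : D, φ.app x =
        (adjU.homEquiv (R.L₀.obj x) (R.L₁.obj x)).symm (R.L₀.map (R.adj₁.unit.app x)) := by
      intro x
      rw [Adjunction.homEquiv_counit]
      rfl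
    refine ⟨
      { obj := fun x => Arrow.mk (φ.app x)
        map := fun {x y} f =>
          Arrow.homMk (u := U.map (R.L₀.map f)) (v := R.L₁.map f) (φ.naturality f)
        map_id := fun x => by ext <;> simp
        map_comp := fun f g => by ext <;> simp }, ⟨Iso.refl _⟩, ⟨Iso.refl _⟩, ?_⟩
    intro x
    refine ⟨rfl, rfl, ?_⟩
    simp only [eqToHom_refl, Category.id_comp, Category.comp_id]
    show (adjU.homEquiv (R.L₀.obj x) (R.L₁.obj x)) (φ.app x) = _
    rw [hφ x, Equiv.apply_symm_apply]
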